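/- The quadratically regularized median lies between 0 and the (zero-closest) weighted median: QrMed_L(w, x) has the same sign as Med(w, x) and satisfies |QrMed_L(w, x)| ≤ |Med(w, x)|. -/

import Mathlib

open Finset

/-- Objective of the quadratically regularized median. -/
noncomputable def qrObj (L : ℝ) {N : ℕ} (w x : Fin N → ℝ) (z : ℝ) : ℝ :=
  z ^ 2 / (2 * L) + ∑ n, w n * |z - x n|

/-- `M` is a weighted median of the scores `x` with weights `w`. -/
def IsWeightedMedian {N : ℕ} (w x : Fin N → ℝ) (M : ℝ) : Prop :=
  (∑ n ∈ univ.filter (fun n => x n < M), w n) ≤ (∑ n, w n) / 2 ∧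
  (∑ n ∈ univ.filter (fun n => M < x n), w n) ≤ (∑ n, w n) / 2

/-- `M` is the weighted median closest to zero. -/
def IsZeroClosestMedian {N : ℕ} (w x : Fin N → ℝ) (M : ℝ) : Prop :=
  IsWeightedMedian w x M ∧ ∀ M', IsWeightedMedian w x M' → |M| ≤ |M'|

/-- A weighted median minimizes the weighted sum of absolute deviations. -/
lemma sum_abs_median_le {N : ℕ} (w x : Fin N → ℝ) (hw : ∀ n, 0 ≤ w n)
    {M : ℝ} (hM : IsWeightedMedian w x M) (z : ℝ) :
    ∑ n, w n * |M - x n| ≤ ∑ n, w n * |z - x n| := by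
  obtain ⟨h1, h2⟩ := hM
  have hdiff : ∑ n, w n * |z - x n| - ∑ n, w n * |M - x n|
      = ∑ n, w n * (|z - x n| - |M - x n|) := by
    rw [← Finset.sum_sub_distrib]
    exact Finset.sum_congr rfl (fun n _ => by ring)
  rcases le_total M z with hz | hz
  · -- use the second median condition, split on M < x n
    have hsplit := Finset.sum_filter_add_sum_filter_not univ (fun n => M < x n)
      (fun n => w n * (|z - x n| - |M - x n|))
    have hwsplit := Finset.sum_filter_add_sum_filter_not univ (fun n => M < x n) w
    have hS : ∑ n ∈ univ.filter (fun n => M < x n), w n * (-(z - M))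
        ≤ ∑ n ∈ univ.filter (fun n => M < x n), w n * (|z - x n| - |M - x n|) := by
      apply Finset.sum_le_sum
      intro n _
      have h3 : |M - x n| - |z - x n| ≤ |(M - x n) - (z - x n)| :=
        abs_sub_abs_le_abs_sub _ _
      have h4 : |(M - x n) - (z - x n)| = z - M := by
        rw [show (M - x n) - (z - x n) = -(z - M) by ring, abs_neg,
          abs_of_nonneg (by linarith)]
      have := hw n
      nlinarith
    have hT : ∑ n ∈ univ.filter (fun n => ¬ M < x n), w n * (|z - x n| - |M - x n|)
        = ∑ n ∈ univ.filter (fun n => ¬ M < x n), w n * (z - M) := by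
      apply Finset.sum_congr rfl
      intro n hn
      have hn' : x n ≤ M := le_of_not_gt (by simpa using (Finset.mem_filter.mp hn).2)
      rw [abs_of_nonneg (by linarith : (0:ℝ) ≤ z - x n),
        abs_of_nonneg (by linarith : (0:ℝ) ≤ M - x n)]
      ring
    have hSsum : ∑ n ∈ univ.filter (fun n => M < x n), w n * (-(z - M))
        = (∑ n ∈ univ.filter (fun n => M < x n), w n) * (-(z - M)) := by
      rw [Finset.sum_mul]
    have hTsum : ∑ n ∈ univ.filter (fun n => ¬ M < x n), w n * (z - M)
        = (∑ n ∈ univ.filter (fun n => ¬ M < x n), w n) * (z - M) := by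
      rw [Finset.sum_mul]
    nlinarith [hS, hT, hSsum, hTsum, hsplit, hwsplit, h2,
      mul_nonneg (sub_nonneg.mpr hz)
        (by linarith : (0:ℝ) ≤ (∑ n, w n) - 2 * ∑ n ∈ univ.filter (fun n => M < x n), w n)]
  · -- use the first median condition, split on x n < M
    have hsplit := Finset.sum_filter_add_sum_filter_not univ (fun n => x n < M)
      (fun n => w n * (|z - x n| - |M - x n|))
    have hwsplit := Finset.sum_filter_add_sum_filter_not univ (fun n => x n < M) w
    have hS : ∑ n ∈ univ.filter (fun n => x n < M), w n * (-(M - z))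
        ≤ ∑ n ∈ univ.filter (fun n => x n < M), w n * (|z - x n| - |M - x n|) := by
      apply Finset.sum_le_sum
      intro n _
      have h3 : |M - x n| - |z - x n| ≤ |(M - x n) - (z - x n)| :=
        abs_sub_abs_le_abs_sub _ _
      have h4 : |(M - x n) - (z - x n)| = M - z := by
        rw [show (M - x n) - (z - x n) = M - z by ring, abs_of_nonneg (by linarith)]
      have := hw n
      nlinarith
    have hT : ∑ n ∈ univ.filter (fun n => ¬ x n < M), w n * (|z - x n| - |M - x n|)
        = ∑ n ∈ univ.filter (fun n => ¬ x n < M), w n * (M - z) := by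
      apply Finset.sum_congr rfl
      intro n hn
      have hn' : M ≤ x n := le_of_not_gt (by simpa using (Finset.mem_filter.mp hn).2)
      rw [abs_of_nonpos (by linarith : z - x n ≤ 0),
        abs_of_nonpos (by linarith : M - x n ≤ 0)]
      ring
    have hSsum : ∑ n ∈ univ.filter (fun n => x n < M), w n * (-(M - z))
        = (∑ n ∈ univ.filter (fun n => x n < M), w n) * (-(M - z)) := by
      rw [Finset.sum_mul]
    have hTsum : ∑ n ∈ univ.filter (fun n => ¬ x n < M), w n * (M - z)
        = (∑ n ∈ univ.filter (fun n => ¬ x n < M), w n) * (M - z) := by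
      rw [Finset.sum_mul]
    nlinarith [hS, hT, hSsum, hTsum, hsplit, hwsplit, h1,
      mul_nonneg (sub_nonneg.mpr hz)
        (by linarith : (0:ℝ) ≤ (∑ n, w n) - 2 * ∑ n ∈ univ.filter (fun n => x n < M), w n)]

/-- Main estimate in the case of a positive zero-closest median. -/
lemma main_pos (L : ℝ) (hL : 0 < L) {N : ℕ} (w x : Fin N → ℝ) (hw : ∀ n, 0 ≤ w n)
    (q M : ℝ)
    (hq : ∀ z : ℝ, qrObj L w x q ≤ qrObj L w x z)
    (hM : IsZeroClosestMedian w x M) (hMpos : 0 < M) :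
    0 < q ∧ q ≤ M := by
  have hW : (0:ℝ) ≤ ∑ n, w n := Finset.sum_nonneg (fun n _ => hw n)
  constructor
  · -- 0 < q
    by_contra hq0
    push_neg at hq0
    -- 0 is not a median
    have hnot0 : ¬ IsWeightedMedian w x 0 := by
      intro h
      have := hM.2 0 h
      rw [abs_of_pos hMpos] at this
      simp at this
      linarith
    -- the low side at 0 is fine, so the high side must fail
    have hA : ∑ n ∈ univ.filter (fun n => x n < 0), w n
        ≤ ∑ n ∈ univ.filter (fun n => x n < M), w n := by
      apply Finset.sum_le_sum_of_subset_of_nonneg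
      · intro a ha
        simp only [Finset.mem_filter, Finset.mem_univ, true_and] at ha ⊢
        linarith
      · intro n _ _; exact hw n
    have hB : (∑ n, w n) / 2 < ∑ n ∈ univ.filter (fun n => 0 < x n), w n := by
      by_contra hB'
      push_neg at hB'
      exact hnot0 ⟨le_trans hA hM.1.1, hB'⟩
    set B := ∑ n ∈ univ.filter (fun n => 0 < x n), w n with hBdef
    set Wt := ∑ n, w n with hWdef
    set c : ℝ := 2 * B - Wt with hcdef
    have hc : 0 < c := by simp only [hcdef]; linarith
    -- the set of positive scores is nonempty
    have hP : (univ.filter (fun n => 0 < x n)).Nonempty := by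
      rcases Finset.eq_empty_or_nonempty (univ.filter (fun n => 0 < x n)) with h | h
      · rw [hBdef, h] at hB
        simp at hB
        linarith
      · exact h
    set m : ℝ := (univ.filter (fun n => 0 < x n)).inf' hP x with hmdef
    have hm : 0 < m := by
      rw [hmdef, Finset.lt_inf'_iff]
      intro n hn
      exact (Finset.mem_filter.mp hn).2
    set ε : ℝ := min (L * c) (min M m) with hεdef
    have hε : 0 < ε := lt_min (mul_pos hL hc) (lt_min hMpos hm)
    have hεLc : ε ≤ L * c := min_le_left _ _
    have hεm : ε ≤ m := le_trans (min_le_right _ _) (min_le_right _ _)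
    have hεx : ∀ n, 0 < x n → ε ≤ x n := by
      intro n hn
      exact le_trans hεm (Finset.inf'_le x (Finset.mem_filter.mpr ⟨Finset.mem_univ n, hn⟩))
    have hwsplit := Finset.sum_filter_add_sum_filter_not univ (fun n => 0 < x n) w
    -- value at ε
    have e1 : ∑ n, w n * |ε - x n| - ∑ n, w n * |0 - x n| = -(ε * B) + ε * (Wt - B) := by
      have hd : ∑ n, (w n * |ε - x n| - w n * |0 - x n|)
          = ∑ n, w n * |ε - x n| - ∑ n, w n * |0 - x n| := Finset.sum_sub_distrib _ _
      rw [← hd, ← Finset.sum_filter_add_sum_filter_not univ (fun n => 0 < x n)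
        (fun n => w n * |ε - x n| - w n * |0 - x n|)]
      have hP1 : ∑ n ∈ univ.filter (fun n => 0 < x n),
          (w n * |ε - x n| - w n * |0 - x n|)
          = ∑ n ∈ univ.filter (fun n => 0 < x n), w n * (-ε) := by
        apply Finset.sum_congr rfl
        intro n hn
        have hn' : 0 < x n := (Finset.mem_filter.mp hn).2
        have h5 := hεx n hn'
        rw [abs_of_nonpos (by linarith : ε - x n ≤ 0),
          abs_of_nonpos (by linarith : (0:ℝ) - x n ≤ 0)]
        ring
      have hP2 : ∑ n ∈ univ.filter (fun n => ¬ 0 < x n),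
          (w n * |ε - x n| - w n * |0 - x n|)
          = ∑ n ∈ univ.filter (fun n => ¬ 0 < x n), w n * ε := by
        apply Finset.sum_congr rfl
        intro n hn
        have hn' : x n ≤ 0 := le_of_not_gt (by simpa using (Finset.mem_filter.mp hn).2)
        rw [abs_of_nonneg (by linarith : (0:ℝ) ≤ ε - x n),
          abs_of_nonneg (by linarith : (0:ℝ) ≤ (0:ℝ) - x n)]
        ring
      rw [hP1, hP2, ← Finset.sum_mul, ← Finset.sum_mul]
      have : ∑ n ∈ univ.filter (fun n => ¬ 0 < x n), w n = Wt - B := by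
        rw [hWdef, hBdef]; linarith [hwsplit]
      rw [this]
      ring
    -- f(ε) < f(0)
    have hfε : qrObj L w x ε < qrObj L w x 0 := by
      unfold qrObj
      have h6 : ε ^ 2 / (2 * L) < ε * c := by
        rw [div_lt_iff₀ (by positivity)]
        nlinarith [mul_pos hε hc, mul_pos (mul_pos hε hc) hL]
      have h7 : (0:ℝ) ^ 2 / (2 * L) = 0 := by simp
      rw [h7]
      have : ∑ n, w n * |ε - x n| = ∑ n, w n * |0 - x n| - ε * c := by
        simp only [hcdef]; linarith [e1]
      rw [this]
      linarith
    -- bound f(0) ≤ f(q) using q ≤ 0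
    have b1 : ∑ n, w n * |0 - x n| - ∑ n, w n * |q - x n| ≤ q * c := by
      have hd : ∑ n, (w n * |0 - x n| - w n * |q - x n|)
          = ∑ n, w n * |0 - x n| - ∑ n, w n * |q - x n| := Finset.sum_sub_distrib _ _
      rw [← hd, ← Finset.sum_filter_add_sum_filter_not univ (fun n => 0 < x n)
        (fun n => w n * |0 - x n| - w n * |q - x n|)]
      have hP1 : ∑ n ∈ univ.filter (fun n => 0 < x n),
          (w n * |0 - x n| - w n * |q - x n|)
          = ∑ n ∈ univ.filter (fun n => 0 < x n), w n * q := by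
        apply Finset.sum_congr rfl
        intro n hn
        have hn' : 0 < x n := (Finset.mem_filter.mp hn).2
        rw [abs_of_nonpos (by linarith : (0:ℝ) - x n ≤ 0),
          abs_of_nonpos (by linarith : q - x n ≤ 0)]
        ring
      have hP2 : ∑ n ∈ univ.filter (fun n => ¬ 0 < x n),
          (w n * |0 - x n| - w n * |q - x n|)
          ≤ ∑ n ∈ univ.filter (fun n => ¬ 0 < x n), w n * (-q) := by
        apply Finset.sum_le_sum
        intro n _
        have h3 : |0 - x n| - |q - x n| ≤ |(0 - x n) - (q - x n)| :=
          abs_sub_abs_le_abs_sub _ _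
        have h4 : |(0 - x n) - (q - x n)| = -q := by
          rw [show (0:ℝ) - x n - (q - x n) = -q by ring, abs_of_nonneg (by linarith)]
        have := hw n
        nlinarith
      have hsum1 : ∑ n ∈ univ.filter (fun n => 0 < x n), w n * q = B * q :=
        (Finset.sum_mul ..).symm
      have hsum2 : ∑ n ∈ univ.filter (fun n => ¬ 0 < x n), w n * (-q)
          = (Wt - B) * (-q) := by
        rw [← Finset.sum_mul]
        congr 1
        rw [hWdef, hBdef]; linarith [hwsplit]
      rw [hP1]
      have : B * q + (Wt - B) * (-q) = q * c := by simp only [hcdef]; ring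
      linarith [hP2, hsum1, hsum2]
    have hqc : q * c ≤ 0 := mul_nonpos_of_nonpos_of_nonneg hq0 hc.le
    have hf0q : qrObj L w x 0 ≤ qrObj L w x q := by
      unfold qrObj
      have h7 : (0:ℝ) ^ 2 / (2 * L) = 0 := by simp
      have h8 : 0 ≤ q ^ 2 / (2 * L) := by positivity
      rw [h7]
      linarith
    have := hq ε
    linarith
  · -- q ≤ M
    by_contra hqM
    push_neg at hqM
    have hg := sum_abs_median_le w x hw hM.1 q
    have hsq : M ^ 2 < q ^ 2 := by nlinarith
    have := hq M
    unfold qrObj at this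
    have h9 : q ^ 2 / (2 * L) ≤ M ^ 2 / (2 * L) := by linarith
    have h10 : q ^ 2 ≤ M ^ 2 := by
      have h2L : (0:ℝ) < 2 * L := by positivity
      exact (div_le_div_iff_of_pos_right h2L).mp h9
    linarith

lemma qrObj_neg (L : ℝ) {N : ℕ} (w x : Fin N → ℝ) (z : ℝ) :
    qrObj L w (fun n => -x n) z = qrObj L w x (-z) := by
  unfold qrObj
  have h1 : (-z) ^ 2 = z ^ 2 := by ring
  rw [h1]
  congr 1
  apply Finset.sum_congr rfl
  intro n _
  rw [show z - -x n = -(-z - x n) by ring, abs_neg]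

lemma median_neg {N : ℕ} (w x : Fin N → ℝ) (M : ℝ)
    (h : IsWeightedMedian w x M) : IsWeightedMedian w (fun n => -x n) (-M) := by
  obtain ⟨h1, h2⟩ := h
  constructor
  · have : (univ.filter (fun n => -x n < -M)) = (univ.filter (fun n => M < x n)) := by
      apply Finset.filter_congr
      intro n _
      simp
    rw [this]; exact h2
  · have : (univ.filter (fun n => -M < -x n)) = (univ.filter (fun n => x n < M)) := by
      apply Finset.filter_congr
      intro n _
      simp
    rw [this]; exact h1

/-- QrMed has the same sign as the zero-closest weighted median, and is at most
as large in absolute value. -/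
theorem qrMed_sign_and_le_med (L : ℝ) (hL : 0 < L) {N : ℕ}
    (w x : Fin N → ℝ) (hw : ∀ n, 0 ≤ w n)
    (q M : ℝ)
    (hq : ∀ z : ℝ, qrObj L w x q ≤ qrObj L w x z)
    (hM : IsZeroClosestMedian w x M) :
    Real.sign q = Real.sign M ∧ |q| ≤ |M| := by
  rcases lt_trichotomy M 0 with hM0 | hM0 | hM0
  · -- negative case, via symmetry
    have hq' : ∀ z : ℝ, qrObj L w (fun n => -x n) (-q) ≤ qrObj L w (fun n => -x n) z := by
      intro z
      rw [qrObj_neg, qrObj_neg, neg_neg]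
      exact hq (-z)
    have hM' : IsZeroClosestMedian w (fun n => -x n) (-M) := by
      refine ⟨median_neg w x M hM.1, ?_⟩
      intro M' hM''
      have h3 := median_neg w (fun n => -x n) M' hM''
      simp only [neg_neg] at h3
      have := hM.2 (-M') h3
      rwa [abs_neg, ← abs_neg M] at this
    obtain ⟨h1, h2⟩ := main_pos L hL w (fun n => -x n) hw (-q) (-M) hq' hM'
      (by linarith)
    have hqneg : q < 0 := by linarith
    constructor
    · rw [Real.sign_of_neg hqneg, Real.sign_of_neg hM0]
    · rw [abs_of_neg hqneg, abs_of_neg hM0]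
      linarith
  · -- zero case : q = 0
    subst hM0
    have hg := sum_abs_median_le w x hw hM.1 q
    have := hq 0
    unfold qrObj at this
    have h7 : (0:ℝ) ^ 2 / (2 * L) = 0 := by simp
    rw [h7] at this
    have h8 : q ^ 2 / (2 * L) ≤ 0 := by linarith
    have h9 : (0:ℝ) ≤ q ^ 2 / (2 * L) := by positivity
    have hq0 : q = 0 := by
      have : q ^ 2 / (2 * L) = 0 := le_antisymm h8 h9
      field_simp at this
      simpa using this
    subst hq0
    simp
  · -- positive case
    obtain ⟨h1, h2⟩ := main_pos L hL w x hw q M hq hM hM0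
    constructor
    · rw [Real.sign_of_pos h1, Real.sign_of_pos hM0]
    · rw [abs_of_pos h1, abs_of_pos hM0]
      exact h2
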